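/- Let G be a graph, let N ⊆ V(G), and let Y be an independent set of vertices disjoint from N such that every vertex of Y has neighborhood exactly N and |Y| > |N|. For any vertex y ∈ Y, the graph G has an edge dominating set of size at most k if and only if G − y has an edge dominating set of size at most k. -/

import Mathlib

open SimpleGraph

/-- An edge dominating set of `G`. -/
def IsEDS {V : Type*} (G : SimpleGraph V) (D : Set (Sym2 V)) : Prop :=
  D ⊆ G.edgeSet ∧ ∀ e ∈ G.edgeSet, ∃ f ∈ D, ∃ x, x ∈ e ∧ x ∈ f

section Aux

variable {V : Type*} {y : V}

private lemma sym2_lift {e : Sym2 V} (he : ∀ x ∈ e, x ≠ y) :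
    ∃ e' : Sym2 {x : V | x ≠ y}, Sym2.map Subtype.val e' = e := by
  induction e using Sym2.ind with
  | _ a b =>
    exact ⟨s(⟨a, he a (by simp)⟩, ⟨b, he b (by simp)⟩), rfl⟩

private lemma mem_map_val_iff {x : {x : V | x ≠ y}} {e : Sym2 {x : V | x ≠ y}} :
    (x : V) ∈ Sym2.map Subtype.val e ↔ x ∈ e := by
  constructor
  · intro h
    rw [Sym2.mem_map] at h
    obtain ⟨a, ha, hax⟩ := h
    rwa [Subtype.val_injective hax] at ha
  · intro h
    exact Sym2.mem_map.mpr ⟨x, h, rfl⟩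

private lemma edge_corr (G : SimpleGraph V) {e : Sym2 {x : V | x ≠ y}} :
    e ∈ (G.induce {x : V | x ≠ y}).edgeSet ↔ Sym2.map Subtype.val e ∈ G.edgeSet := by
  induction e using Sym2.ind with
  | _ a b => simp [SimpleGraph.mem_edgeSet, SimpleGraph.comap_adj]

private lemma other_endpoint {W : Type*} {H : SimpleGraph W} {f : Sym2 W}
    (hf : f ∈ H.edgeSet) {x : W} (hx : x ∈ f) :
    ∃ z, f = s(x, z) ∧ H.Adj x z := by
  obtain ⟨z, rfl⟩ := Sym2.mem_iff_exists.mp hx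
  exact ⟨z, rfl, H.mem_edgeSet.mp hf⟩

private lemma emb_of_card_le {α β : Type*} [Finite α] [Finite β]
    (h : Nat.card α ≤ Nat.card β) : Nonempty (α ↪ β) := by
  have := Fintype.ofFinite α; have := Fintype.ofFinite β
  rw [Function.Embedding.nonempty_iff_card_le]
  simpa [Nat.card_eq_fintype_card] using h

end Aux

/-- Twin elimination rule for Edge Dominating Set: if `Y` is an independent set of
vertices, disjoint from `N`, each with neighborhood exactly `N`, and `|Y| > |N|`, then
for any `y ∈ Y`, `G` has an edge dominating set of size at most `k` iff `G − y` does. -/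
theorem stmt12 {V : Type*} [Fintype V] (G : SimpleGraph V) (N Y : Set V)
    (hdisj : Disjoint Y N)
    (hind : ∀ y₁ ∈ Y, ∀ y₂ ∈ Y, ¬ G.Adj y₁ y₂)
    (hnbhd : ∀ y ∈ Y, G.neighborSet y = N)
    (hcard : N.ncard < Y.ncard)
    (y : V) (hy : y ∈ Y) (k : ℕ) :
    (∃ D : Set (Sym2 V), IsEDS G D ∧ D.ncard ≤ k) ↔
    (∃ D' : Set (Sym2 ↥{x : V | x ≠ y}), IsEDS (G.induce {x : V | x ≠ y}) D' ∧
      D'.ncard ≤ k) := by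
  classical
  have hyN : y ∉ N := fun h => Set.disjoint_left.mp hdisj hy h
  have hNne : ∀ n ∈ N, n ≠ y := fun n hn h => hyN (h ▸ hn)
  constructor
  · -- forward direction
    rintro ⟨D, ⟨hDsub, hDdom⟩, hDk⟩
    obtain ⟨D₁, hD₁sub, hD₁avoid, hD₁dom, hD₁card⟩ :
        ∃ D₁ : Set (Sym2 V), D₁ ⊆ G.edgeSet ∧ (∀ f ∈ D₁, ∀ x ∈ f, x ≠ y) ∧
          (∀ e ∈ G.edgeSet, (∀ x ∈ e, x ≠ y) → ∃ f ∈ D₁, ∃ x, x ∈ e ∧ x ∈ f) ∧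
          D₁.ncard ≤ D.ncard := by
      by_cases hN : N = ∅
      · refine ⟨D, hDsub, ?_, fun e he _ => hDdom e he, le_refl _⟩
        intro f hf x hx hxy
        rw [hxy] at hx
        obtain ⟨z, _, hadj⟩ := other_endpoint (hDsub hf) hx
        have hz : z ∈ G.neighborSet y := hadj
        rw [hnbhd y hy, hN] at hz
        exact hz
      · -- N nonempty : pick another twin y'
        obtain ⟨n₀, hn₀⟩ := Set.nonempty_iff_ne_empty.mpr hN
        have hY2 : 1 < Y.ncard :=
          lt_of_le_of_lt ((Set.ncard_pos (Set.toFinite N)).mpr ⟨n₀, hn₀⟩) hcard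
        obtain ⟨y', hy'Y, hy'ne⟩ := Set.exists_ne_of_one_lt_ncard hY2 y
        set σ : V → V := fun x => if x = y then y' else x with hσ
        have hσne : ∀ x, σ x ≠ y := by
          intro x
          by_cases h : x = y
          · simp [hσ, h, hy'ne]
          · simp [hσ, h]
        have hσadj : ∀ a b, G.Adj a b → G.Adj (σ a) (σ b) := by
          intro a b hab
          have hnab : ¬ (a = y ∧ b = y) := by
            rintro ⟨rfl, rfl⟩; exact G.irrefl hab
          by_cases ha : a = y
          · have hb : b ≠ y := fun hb => hnab ⟨ha, hb⟩
            subst ha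
            have hbN : b ∈ N := by rw [← hnbhd a hy]; exact hab
            have : b ∈ G.neighborSet y' := by rw [hnbhd y' hy'Y]; exact hbN
            simpa [hσ, hb] using this
          · by_cases hb : b = y
            · subst hb
              have haN : a ∈ N := by rw [← hnbhd b hy]; exact hab.symm
              have : a ∈ G.neighborSet y' := by rw [hnbhd y' hy'Y]; exact haN
              simpa [hσ, ha] using this.symm
            · simpa [hσ, ha, hb] using hab
        refine ⟨(Sym2.map σ) '' D, ?_, ?_, ?_, Set.ncard_image_le (Set.toFinite _)⟩
        · rintro f ⟨f₀, hf₀, rfl⟩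
          have := hDsub hf₀
          induction f₀ using Sym2.ind with
          | _ a b =>
            rw [SimpleGraph.mem_edgeSet] at this
            simpa [SimpleGraph.mem_edgeSet] using hσadj a b this
        · rintro f ⟨f₀, hf₀, rfl⟩ x hx
          rw [Sym2.mem_map] at hx
          obtain ⟨a, _, rfl⟩ := hx
          exact hσne a
        · intro e he hey
          obtain ⟨f₀, hf₀, x, hxe, hxf⟩ := hDdom e he
          refine ⟨Sym2.map σ f₀, ⟨f₀, hf₀, rfl⟩, x, hxe, ?_⟩
          have hxy : x ≠ y := hey x hxe
          have : σ x ∈ Sym2.map σ f₀ := Sym2.mem_map.mpr ⟨x, hxf, rfl⟩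
          simpa [hσ, hxy] using this
    -- now lift D₁ to the induced subgraph
    refine ⟨(Sym2.map Subtype.val) ⁻¹' D₁, ⟨?_, ?_⟩, ?_⟩
    · intro e' he'
      rw [edge_corr G]
      exact hD₁sub he'
    · intro e' he'
      have heE : Sym2.map Subtype.val e' ∈ G.edgeSet := (edge_corr G).mp he'
      have heY : ∀ x ∈ Sym2.map Subtype.val e', x ≠ y := by
        intro x hx
        rw [Sym2.mem_map] at hx
        obtain ⟨a, _, rfl⟩ := hx
        exact a.2
      obtain ⟨f, hf, x, hxe, hxf⟩ := hD₁dom _ heE heY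
      have hxy : x ≠ y := heY x hxe
      obtain ⟨f', rfl⟩ := sym2_lift (hD₁avoid f hf)
      rw [Sym2.mem_map] at hxe hxf
      obtain ⟨a, hae, rfl⟩ := hxe
      obtain ⟨b, hbf, hba⟩ := hxf
      have : b = a := Subtype.val_injective hba
      subst this
      exact ⟨f', hf, b, hae, hbf⟩
    · have himg : Sym2.map (Subtype.val : {x : V | x ≠ y} → V) ''
          ((Sym2.map (Subtype.val : {x : V | x ≠ y} → V)) ⁻¹' D₁) = D₁ := by
        apply Set.Subset.antisymm (Set.image_preimage_subset _ _)
        intro f hf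
        obtain ⟨f', rfl⟩ := sym2_lift (hD₁avoid f hf)
        exact ⟨f', hf, rfl⟩
      have := Set.ncard_image_of_injective
        ((Sym2.map (Subtype.val : {x : V | x ≠ y} → V)) ⁻¹' D₁)
        (Sym2.map.injective Subtype.val_injective)
      rw [himg] at this
      omega
  · -- reverse direction
    rintro ⟨D', ⟨hsub, hdom⟩, hk⟩
    -- Step A: modify D' so that it covers all of N
    obtain ⟨D₂, ⟨h₂sub, h₂dom⟩, h₂card, h₂cov⟩ :
        ∃ D₂ : Set (Sym2 ↥{x : V | x ≠ y}), IsEDS (G.induce {x : V | x ≠ y}) D₂ ∧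
          D₂.ncard ≤ D'.ncard ∧
          ∀ n ∈ N, ∃ f ∈ D₂, ∃ x : ↥{x : V | x ≠ y}, x ∈ f ∧ (x : V) = n := by
      by_cases hcov : ∀ n ∈ N, ∃ f ∈ D', ∃ x : ↥{x : V | x ≠ y}, x ∈ f ∧ (x : V) = n
      · exact ⟨D', ⟨hsub, hdom⟩, le_refl _, hcov⟩
      · push_neg at hcov
        obtain ⟨n₀, hn₀N, hn₀⟩ := hcov
        -- every twin other than y is matched by D'
        have htouch : ∀ y₂ ∈ Y, ∀ h : y₂ ≠ y,
            ∃ f ∈ D', (⟨y₂, h⟩ : ↥{x : V | x ≠ y}) ∈ f := by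
          intro y₂ hy₂ hne
          have hadj : (G.induce {x : V | x ≠ y}).Adj ⟨y₂, hne⟩ ⟨n₀, hNne n₀ hn₀N⟩ := by
            show G.Adj y₂ n₀
            have : n₀ ∈ G.neighborSet y₂ := by rw [hnbhd y₂ hy₂]; exact hn₀N
            exact this
          obtain ⟨f, hf, x, hxe, hxf⟩ :=
            hdom _ ((G.induce {x : V | x ≠ y}).mem_edgeSet.mpr hadj)
          rcases Sym2.mem_iff.mp hxe with h | h
          · subst h; exact ⟨f, hf, hxf⟩
          · exact absurd (congrArg Subtype.val h) (fun hh => hn₀ f hf x hxf hh)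
        -- the removed set R
        set R : Set (Sym2 ↥{x : V | x ≠ y}) :=
          {f ∈ D' | ∃ y₂, ∃ (hy₂ : y₂ ∈ Y) (hne : y₂ ≠ y),
            (⟨y₂, hne⟩ : ↥{x : V | x ≠ y}) ∈ f} with hR
        have hRsub : R ⊆ D' := fun f hf => hf.1
        -- an injection from Y \ {y} into R
        have hchoice : ∀ y₂ : ↥(Y \ {y}),
            ∃ f ∈ R, (⟨(y₂ : V), y₂.2.2⟩ : ↥{x : V | x ≠ y}) ∈ f := by
          intro y₂
          obtain ⟨f, hf, hyf⟩ := htouch y₂ y₂.2.1 y₂.2.2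
          exact ⟨f, ⟨hf, y₂, y₂.2.1, y₂.2.2, hyf⟩, hyf⟩
        choose j hjR hjmem using hchoice
        have hjinj : Function.Injective j := by
          intro a b hab
          by_contra hne
          have haval : (a : V) ≠ (b : V) := fun h => hne (Subtype.val_injective h)
          have hjb := hjmem b
          rw [← hab] at hjb
          have hja := hjmem a
          obtain ⟨z, hz, hadj⟩ := other_endpoint (hsub (hRsub (hjR a))) hja
          rw [hz, Sym2.mem_iff] at hjb
          rcases hjb with h | h
          · exact haval (congrArg Subtype.val h).symm
          · have : G.Adj (a : V) (b : V) := by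
              have := hadj
              rw [← h] at this
              exact this
            exact hind a a.2.1 b b.2.1 this
        have hNcard : N.ncard ≤ (Y \ {y}).ncard := by
          have := Set.ncard_diff_singleton_of_mem hy
          omega
        have hRcard : N.ncard ≤ R.ncard := by
          have h1 : Set.range j ⊆ R := Set.range_subset_iff.mpr hjR
          have h2 : (Set.range j).ncard = (Y \ {y}).ncard := by
            rw [← Set.image_univ,
              Set.ncard_image_of_injective _ hjinj, Set.ncard_univ,
              Nat.card_coe_set_eq]
          have h3 := Set.ncard_le_ncard h1 (Set.toFinite R)
          omega
        -- the embedding from N into Y \ {y}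
        obtain ⟨ψ⟩ : Nonempty (↥N ↪ ↥(Y \ {y})) := by
          apply emb_of_card_le
          rwa [Nat.card_coe_set_eq, Nat.card_coe_set_eq]
        -- the added set A
        set g : ↥N → Sym2 ↥{x : V | x ≠ y} := fun n =>
          s((⟨(ψ n : V), (ψ n).2.2⟩ : ↥{x : V | x ≠ y}),
            (⟨(n : V), hNne n n.2⟩ : ↥{x : V | x ≠ y})) with hg
        set A : Set (Sym2 ↥{x : V | x ≠ y}) := Set.range g with hA
        have hAsub : A ⊆ (G.induce {x : V | x ≠ y}).edgeSet := by
          rintro f ⟨n, rfl⟩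
          rw [SimpleGraph.mem_edgeSet]
          show G.Adj (ψ n : V) (n : V)
          have : (n : V) ∈ G.neighborSet (ψ n : V) := by
            rw [hnbhd _ (ψ n).2.1]; exact n.2
          exact this
        have hAcard : A.ncard ≤ N.ncard := by
          rw [hA, ← Set.image_univ]
          calc (g '' Set.univ).ncard ≤ (Set.univ : Set ↥N).ncard :=
                Set.ncard_image_le (Set.toFinite _)
            _ = N.ncard := by rw [Set.ncard_univ, Nat.card_coe_set_eq]
        refine ⟨(D' \ R) ∪ A, ⟨?_, ?_⟩, ?_, ?_⟩
        · rintro f (hf | hf)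
          · exact hsub hf.1
          · exact hAsub hf
        · -- domination
          intro e he
          by_cases hNe : ∃ x, x ∈ e ∧ (x : V) ∈ N
          · obtain ⟨x, hxe, hxN⟩ := hNe
            refine ⟨g ⟨(x : V), hxN⟩, Or.inr ⟨_, rfl⟩, x, hxe, ?_⟩
            show x ∈ s((⟨(ψ ⟨(x : V), hxN⟩ : V), (ψ ⟨(x : V), hxN⟩).2.2⟩ : ↥{x : V | x ≠ y}),
              (⟨(x : V), hNne _ hxN⟩ : ↥{x : V | x ≠ y}))
            exact Sym2.mem_iff.mpr (Or.inr (Subtype.ext rfl))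
          · push_neg at hNe
            obtain ⟨f, hf, x, hxe, hxf⟩ := hdom e he
            refine ⟨f, Or.inl ⟨hf, ?_⟩, x, hxe, hxf⟩
            rintro ⟨-, y₂, hy₂Y, hy₂ne, hy₂f⟩
            obtain ⟨z, hz, hadj⟩ := other_endpoint (hsub hf) hy₂f
            have hzN : (z : V) ∈ N := by
              have : (z : V) ∈ G.neighborSet y₂ := hadj
              rwa [hnbhd y₂ hy₂Y] at this
            rw [hz, Sym2.mem_iff] at hxf
            rcases hxf with h | h
            · -- x is the twin y₂; then e has an endpoint in N
              subst h
              obtain ⟨w, hw, hadjw⟩ := other_endpoint he hxe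
              have hwN : (w : V) ∈ N := by
                have : (w : V) ∈ G.neighborSet y₂ := hadjw
                rwa [hnbhd y₂ hy₂Y] at this
              exact hNe w (by rw [hw]; simp) hwN
            · subst h
              exact hNe x hxe hzN
        · -- cardinality
          have hd : (D' \ R).ncard = D'.ncard - R.ncard :=
            Set.ncard_diff hRsub (Set.toFinite R)
          have hu := Set.ncard_union_le (D' \ R) A
          have hr := Set.ncard_le_ncard hRsub (Set.toFinite D')
          omega
        · -- coverage of N
          intro n hn
          exact ⟨g ⟨n, hn⟩, Or.inr ⟨_, rfl⟩, ⟨n, hNne n hn⟩, by rw [hg]; simp, rfl⟩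
    -- Step B: push D₂ forward to G
    refine ⟨Sym2.map Subtype.val '' D₂, ⟨?_, ?_⟩, ?_⟩
    · rintro f ⟨f', hf', rfl⟩
      exact (edge_corr G).mp (h₂sub hf')
    · intro e he
      by_cases hye : y ∈ e
      · obtain ⟨b, hb, hadj⟩ := other_endpoint he hye
        have hbN : b ∈ N := by
          have : b ∈ G.neighborSet y := hadj
          rwa [hnbhd y hy] at this
        obtain ⟨f, hf, x, hxf, hxb⟩ := h₂cov b hbN
        refine ⟨Sym2.map Subtype.val f, ⟨f, hf, rfl⟩, b, by rw [hb]; simp, ?_⟩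
        rw [← hxb]
        exact Sym2.mem_map.mpr ⟨x, hxf, rfl⟩
      · have hey : ∀ x ∈ e, x ≠ y := fun x hx h => hye (h ▸ hx)
        obtain ⟨e', rfl⟩ := sym2_lift hey
        obtain ⟨f, hf, x, hxe, hxf⟩ := h₂dom e' ((edge_corr G).mpr he)
        exact ⟨Sym2.map Subtype.val f, ⟨f, hf, rfl⟩, (x : V),
          mem_map_val_iff.mpr hxe, mem_map_val_iff.mpr hxf⟩
    · rw [Set.ncard_image_of_injective _ (Sym2.map.injective Subtype.val_injective)]
      omega
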